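/- Let A₁, A₂, A₁′, A₂′ ⊆ ℕ × ℕ be Ferrers diagrams and let (u, v) ∈ ℕ × ℕ be such that A₁′ ∖ A₂′ = { (i+u, j+v) : (i,j) ∈ A₁ ∖ A₂ }, i.e. the skew Ferrers diagram A₁′ ∖ A₂′ is the translate of A₁ ∖ A₂ by (u, v). Then the R-modules I_{A₂} / (I_{A₁} ⊓ I_{A₂}) and I_{A₂′} / (I_{A₁′} ⊓ I_{A₂′}) are isomorphic. (In particular, translating a skew Ferrers diagram by (k,0), by (0,k), or by (1,1) — multiplication by x^k, y^k, or xy in the representation tableau — does not change the isomorphism class of the attached ℂ[x,y]-module; this is the module-theoretic content of the periodicity Remark.) -/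

import Mathlib

open MvPolynomial

/-- A Ferrers diagram: a subset `A ⊆ ℕ × ℕ` such that the complement is upward closed, i.e.
for all `p ∉ A` and all `q`, `p + q ∉ A`. -/
def IsFerrers (A : Set (ℕ × ℕ)) : Prop :=
  ∀ p ∉ A, ∀ q : ℕ × ℕ, p + q ∉ A

/-- The monomial ideal of `ℂ[x,y]` spanned by the monomials `x^i y^j` with `(i,j) ∉ A`. -/
noncomputable def ferrersIdeal (A : Set (ℕ × ℕ)) : Ideal (MvPolynomial (Fin 2) ℂ) :=
  Ideal.span { m | ∃ p : ℕ × ℕ, p ∉ A ∧ m = X 0 ^ p.1 * X 1 ^ p.2 }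

/-- The `ℂ[x,y]`-module `I_{A₂} / (I_{A₁} ⊓ I_{A₂})` attached to the presentation
`Γ = A₁ ∖ A₂` of a skew Ferrers diagram. -/
abbrev sfdModule (A₁ A₂ : Set (ℕ × ℕ)) : Type :=
  ↥(ferrersIdeal A₂) ⧸
    (Submodule.comap (ferrersIdeal A₂).subtype (ferrersIdeal A₁ ⊓ ferrersIdeal A₂))

noncomputable section
abbrev R2 := MvPolynomial (Fin 2) ℂ

def toPair (d : Fin 2 →₀ ℕ) : ℕ × ℕ := (d 0, d 1)

lemma toPair_add (d e : Fin 2 →₀ ℕ) : toPair (d + e) = toPair d + toPair e := by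
  simp [toPair, Prod.ext_iff]

def eUV (u v : ℕ) : Fin 2 →₀ ℕ := Finsupp.single 0 u + Finsupp.single 1 v

lemma eUV_apply0 (u v : ℕ) : eUV u v 0 = u := by simp [eUV, Finsupp.single_apply]
lemma eUV_apply1 (u v : ℕ) : eUV u v 1 = v := by simp [eUV, Finsupp.single_apply]

lemma toPair_eUV (u v : ℕ) : toPair (eUV u v) = (u, v) := by
  simp [toPair, eUV_apply0, eUV_apply1]

lemma mono_eq (u v : ℕ) : (X 0 : R2) ^ u * X 1 ^ v = monomial (eUV u v) 1 := by
  rw [X_pow_eq_monomial, X_pow_eq_monomial, monomial_mul, one_mul]; rfl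

lemma monomial_mem {A : Set (ℕ × ℕ)} {d : Fin 2 →₀ ℕ} (h : toPair d ∉ A) (c : ℂ) :
    (monomial d c : R2) ∈ ferrersIdeal A := by
  have hd : (monomial d c : R2) = C c * (X 0 ^ d 0 * X 1 ^ d 1) := by
    rw [monomial_eq]
    congr 1
    rw [Finsupp.prod_fintype _ _ (fun i => pow_zero _), Fin.prod_univ_two]
  rw [hd]
  exact Ideal.mul_mem_left _ _ (Ideal.subset_span ⟨toPair d, h, rfl⟩)

lemma mem_ferrersIdeal {A : Set (ℕ × ℕ)} (hA : IsFerrers A) (f : R2) :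
    f ∈ ferrersIdeal A ↔ ∀ d ∈ f.support, toPair d ∉ A := by
  classical
  constructor
  · intro hf
    let T : Ideal R2 :=
      { carrier := {g : R2 | ∀ d ∈ g.support, toPair d ∉ A}
        zero_mem' := by simp
        add_mem' := by
          intro a b ha hb d hd
          rcases Finset.mem_union.mp (MvPolynomial.support_add hd) with h | h
          exacts [ha d h, hb d h]
        smul_mem' := by
          intro c g hg d hd
          rw [smul_eq_mul] at hd
          rcases Finset.mem_add.mp (MvPolynomial.support_mul c g hd) with ⟨d₁, h₁, d₂, h₂, rfl⟩
          rw [toPair_add, add_comm]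
          exact hA _ (hg d₂ h₂) (toPair d₁) }
    suffices hle : ferrersIdeal A ≤ T from hle hf
    refine Ideal.span_le.mpr ?_
    rintro m ⟨p, hp, rfl⟩
    intro d hd
    rw [mono_eq, MvPolynomial.support_monomial, if_neg one_ne_zero, Finset.mem_singleton] at hd
    subst hd
    rwa [toPair_eUV]
  · intro h
    rw [← MvPolynomial.support_sum_monomial_coeff f]
    exact Ideal.sum_mem _ fun d hd => monomial_mem (h d hd) _

lemma monomial_one_mul_mem {B : Set (ℕ × ℕ)} (hB : IsFerrers B) (e : Fin 2 →₀ ℕ) (f : R2) :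
    (monomial e 1 * f ∈ ferrersIdeal B) ↔ ∀ d ∈ f.support, toPair (e + d) ∉ B := by
  classical
  rw [mem_ferrersIdeal hB]
  constructor
  · intro h d hd
    apply h (e + d)
    rw [MvPolynomial.mem_support_iff, MvPolynomial.coeff_monomial_mul, one_mul]
    exact MvPolynomial.mem_support_iff.mp hd
  · intro h d hd
    rcases Finset.mem_add.mp (MvPolynomial.support_mul _ _ hd) with ⟨d₁, h₁, d₂, h₂, rfl⟩
    rw [MvPolynomial.support_monomial, if_neg one_ne_zero, Finset.mem_singleton] at h₁
    subst h₁
    exact h d₂ h₂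

/-- downward closure -/
def dc (Γ : Set (ℕ × ℕ)) : Set (ℕ × ℕ) := {p | ∃ q, p + q ∈ Γ}

lemma main (A₁ A₂ : Set (ℕ × ℕ)) (u v : ℕ) (h₁ : IsFerrers A₁) (h₂ : IsFerrers A₂)
    (Γ : Set (ℕ × ℕ)) (hΓ : Γ = (fun p : ℕ × ℕ => p + (u, v)) '' (A₁ \ A₂)) :
    Nonempty (sfdModule A₁ A₂ ≃ₗ[R2] sfdModule (dc Γ) (dc Γ \ Γ)) := by
  classical
  subst hΓ
  set Γ : Set (ℕ × ℕ) := (fun p : ℕ × ℕ => p + (u, v)) '' (A₁ \ A₂) with hΓdef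
  -- basic membership facts
  have claim_in : ∀ a : ℕ × ℕ, a ∈ A₁ → a ∉ A₂ → a + (u, v) ∈ Γ :=
    fun a h h' => ⟨a, ⟨h, h'⟩, rfl⟩
  have claim_out : ∀ a : ℕ × ℕ, a ∉ A₁ → a + (u, v) ∉ dc Γ := by
    rintro a ha ⟨q, b, ⟨hb1, -⟩, hb⟩
    have hba : b = a + q := by
      have hb' : b + (u, v) = a + q + (u, v) := by
        rw [show a + q + (u, v) = a + (u, v) + q by abel]
        exact hb
      exact add_right_cancel hb'
    exact h₁ a ha q (hba ▸ hb1)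
  have relF : ∀ p ∈ Γ, ∀ q : ℕ × ℕ, p + q ∉ Γ → ∀ r : ℕ × ℕ, p + q + r ∉ Γ := by
    rintro p ⟨a, ⟨ha1, ha2⟩, rfl⟩ q hq r hr
    have haq : a + q ∉ A₁ := by
      intro h
      exact hq ⟨a + q, ⟨h, h₂ a ha2 q⟩, by exact add_right_comm a q (u, v)⟩
    rcases hr with ⟨b, ⟨hb1, -⟩, hb⟩
    have hba : b = a + q + r := by
      have hb' : b + (u, v) = a + q + r + (u, v) := by
        rw [show a + q + r + (u, v) = a + (u, v) + q + r by abel]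
        exact hb
      exact add_right_cancel hb'
    exact h₁ _ haq r (hba ▸ hb1)
  have hdc : IsFerrers (dc Γ) := by
    rintro p hp q ⟨s, hs⟩
    exact hp ⟨q + s, by rwa [← add_assoc]⟩
  have hΓdc : ∀ p ∈ Γ, p ∈ dc Γ := fun p hp => ⟨0, by rwa [add_zero]⟩
  have hc2 : IsFerrers (dc Γ \ Γ) := by
    rintro p hp q ⟨⟨s, hs⟩, hpq2⟩
    by_cases hpΓ : p ∈ Γ
    · exact relF p hpΓ q hpq2 s hs
    · exact hp ⟨⟨q + s, by rwa [← add_assoc]⟩, hpΓ⟩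
  -- the multiplication map
  set e : Fin 2 →₀ ℕ := eUV u v with he
  set m : R2 := monomial e 1 with hm
  have htp : ∀ d : Fin 2 →₀ ℕ, toPair (e + d) = toPair d + (u, v) := by
    intro d
    rw [toPair_add, he, toPair_eUV, add_comm]
  have keymem : ∀ f : R2, f ∈ ferrersIdeal A₂ → m * f ∈ ferrersIdeal (dc Γ \ Γ) := by
    intro f hf
    rw [hm, monomial_one_mul_mem hc2]
    intro d hd
    have hd2 : toPair d ∉ A₂ := (mem_ferrersIdeal h₂ f).mp hf d hd
    rw [htp]
    by_cases hd1 : toPair d ∈ A₁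
    · exact fun h => h.2 (claim_in _ hd1 hd2)
    · exact fun h => claim_out _ hd1 h.1
  let ψ : ↥(ferrersIdeal A₂) →ₗ[R2] ↥(ferrersIdeal (dc Γ \ Γ)) :=
    { toFun := fun f => ⟨m * f, keymem f f.2⟩
      map_add' := fun f g => by ext; simp [mul_add]
      map_smul' := fun c f => by ext; simp [smul_eq_mul]; ring }
  set K' : Submodule R2 ↥(ferrersIdeal (dc Γ \ Γ)) :=
    Submodule.comap (ferrersIdeal (dc Γ \ Γ)).subtype
      (ferrersIdeal (dc Γ) ⊓ ferrersIdeal (dc Γ \ Γ)) with hK'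
  let L : ↥(ferrersIdeal A₂) →ₗ[R2] sfdModule (dc Γ) (dc Γ \ Γ) :=
    (Submodule.mkQ K').comp ψ
  have hker : Submodule.comap (ferrersIdeal A₂).subtype (ferrersIdeal A₁ ⊓ ferrersIdeal A₂)
      = LinearMap.ker L := by
    ext x
    obtain ⟨f, hf⟩ := x
    have hsupp : ∀ d ∈ f.support, toPair d ∉ A₂ := (mem_ferrersIdeal h₂ f).mp hf
    simp only [Submodule.mem_comap, Submodule.mem_inf, LinearMap.mem_ker, L,
      LinearMap.comp_apply, Submodule.mkQ_apply, Submodule.Quotient.mk_eq_zero, hK']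
    constructor
    · rintro ⟨hf1, -⟩
      refine ⟨?_, keymem f hf⟩
      show m * f ∈ ferrersIdeal (dc Γ)
      rw [hm, monomial_one_mul_mem hdc]
      intro d hd
      rw [htp]
      exact claim_out _ ((mem_ferrersIdeal h₁ f).mp hf1 d hd)
    · rintro ⟨hf1, -⟩
      refine ⟨?_, hf⟩
      show f ∈ ferrersIdeal A₁
      replace hf1 : m * f ∈ ferrersIdeal (dc Γ) := hf1
      rw [hm, monomial_one_mul_mem hdc] at hf1
      rw [mem_ferrersIdeal h₁]
      intro d hd hdA₁
      apply hf1 d hd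
      rw [htp]
      exact hΓdc _ (claim_in _ hdA₁ (hsupp d hd))
  have hsurj : Function.Surjective L := by
    intro y
    obtain ⟨⟨f, hf⟩, rfl⟩ := Submodule.Quotient.mk_surjective K' y
    have hsupp : ∀ d ∈ f.support, toPair d ∉ dc Γ \ Γ := (mem_ferrersIdeal hc2 f).mp hf
    set g : R2 := ∑ d ∈ f.support,
      if toPair d ∈ Γ then monomial (d - e) (coeff d f) else 0 with hgdef
    have hsub : ∀ (d : Fin 2 →₀ ℕ) (a : ℕ × ℕ), a + (u, v) = toPair d →
        toPair (d - e) = a ∧ e + (d - e) = d := by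
      intro d a ha
      have h0 : d 0 = a.1 + u := (congrArg Prod.fst ha).symm
      have h1 : d 1 = a.2 + v := (congrArg Prod.snd ha).symm
      constructor
      · simp [toPair, Finsupp.tsub_apply, he, eUV_apply0, eUV_apply1, Prod.ext_iff, h0, h1]
      · ext i
        fin_cases i <;>
          simp [Finsupp.tsub_apply, he, eUV_apply0, eUV_apply1, h0, h1] <;> omega
    have hg : g ∈ ferrersIdeal A₂ := by
      refine Ideal.sum_mem _ fun d hd => ?_
      split_ifs with hdΓ
      · rcases hdΓ with ⟨a, ⟨-, ha2⟩, ha⟩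
        refine monomial_mem ?_ _
        rw [(hsub d a ha).1]
        exact ha2
      · exact Ideal.zero_mem _
    have hmul : m * g = ∑ d ∈ f.support,
        if toPair d ∈ Γ then monomial d (coeff d f) else 0 := by
      rw [hgdef, Finset.mul_sum]
      refine Finset.sum_congr rfl fun d hd => ?_
      split_ifs with hdΓ
      · rcases hdΓ with ⟨a, -, ha⟩
        rw [hm, monomial_mul, one_mul, (hsub d a ha).2]
      · exact mul_zero _
    have hdiffeq : f - m * g = ∑ d ∈ f.support,
        if toPair d ∈ Γ then 0 else monomial d (coeff d f) := by
      conv_lhs => rw [← MvPolynomial.support_sum_monomial_coeff f]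
      rw [hmul, ← Finset.sum_sub_distrib]
      refine Finset.sum_congr rfl fun d hd => ?_
      split_ifs <;> simp
    have hdiff : f - m * g ∈ ferrersIdeal (dc Γ) ⊓ ferrersIdeal (dc Γ \ Γ) := by
      rw [hdiffeq]
      refine Submodule.sum_mem _ fun d hd => ?_
      split_ifs with hdΓ
      · exact zero_mem _
      · have hnd : toPair d ∉ dc Γ := fun hin => (hsupp d hd) ⟨hin, hdΓ⟩
        exact ⟨monomial_mem hnd _, monomial_mem (fun hc => hnd hc.1) _⟩
    refine ⟨⟨g, hg⟩, ?_⟩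
    show Submodule.mkQ K' (ψ ⟨g, hg⟩) = Submodule.Quotient.mk ⟨f, hf⟩
    rw [Submodule.mkQ_apply, Submodule.Quotient.eq]
    rw [hK', Submodule.mem_comap]
    have hco : (ferrersIdeal (dc Γ \ Γ)).subtype (ψ ⟨g, hg⟩ - ⟨f, hf⟩) = -(f - m * g) := by
      simp [ψ]
    rw [hco]
    exact neg_mem hdiff
  exact ⟨(Submodule.quotEquivOfEq _ _ hker).trans (L.quotKerEquivOfSurjective hsurj)⟩


end

/-- If the skew Ferrers diagram `A₁′ ∖ A₂′` is the translate of `A₁ ∖ A₂`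
by a vector `(u,v) ∈ ℕ × ℕ`, then the attached `ℂ[x,y]`-modules are isomorphic.  In particular
translating by `(k,0)`, `(0,k)` or `(1,1)` (multiplication by `x^k`, `y^k` or `xy` in the
representation tableau) does not change the isomorphism class of the attached module. -/
theorem stmt2 (A₁ A₂ A₁' A₂' : Set (ℕ × ℕ)) (u v : ℕ)
    (h₁ : IsFerrers A₁) (h₂ : IsFerrers A₂) (h₁' : IsFerrers A₁') (h₂' : IsFerrers A₂')
    (hΓ : A₁' \ A₂' = (fun p : ℕ × ℕ => p + (u, v)) '' (A₁ \ A₂)) :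
    Nonempty (sfdModule A₁ A₂ ≃ₗ[MvPolynomial (Fin 2) ℂ] sfdModule A₁' A₂') := by
  obtain ⟨E₁⟩ := main A₁ A₂ u v h₁ h₂ (A₁' \ A₂') hΓ
  obtain ⟨E₂⟩ := main A₁' A₂' 0 0 h₁' h₂' (A₁' \ A₂') (by
    ext p
    simp [Prod.ext_iff])
  exact ⟨E₁.trans E₂.symm⟩
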